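/- For every bounded linear operator A on a complex Hilbert space H and every v ∈ [0,1], the numerical radius satisfies ω(A) ≤ (1/2) ‖ |A|^{2(1-v)} + |A*|^{2v} ‖. -/

import Mathlib

variable {H : Type*} [NormedAddCommGroup H] [InnerProductSpace ℂ H] [CompleteSpace H]

/-- The numerical radius of a bounded linear operator. -/
noncomputable def numRadius (A : H →L[ℂ] H) : ℝ :=
  ⨆ x : {x : H // ‖x‖ = 1}, ‖(inner ℂ (A x) (x : H) : ℂ)‖

/-- The absolute value |A| = (A*A)^(1/2). -/
noncomputable def absOp (A : H →L[ℂ] H) : H →L[ℂ] H :=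
  CFC.sqrt (ContinuousLinearMap.adjoint A * A)

/-- Real powers of an operator via continuous functional calculus. -/
noncomputable def opRpow (T : H →L[ℂ] H) (r : ℝ) : H →L[ℂ] H :=
  cfc (fun t : ℝ => t ^ r) T

namespace KittanehAux

open ContinuousLinearMap
open scoped NNReal

local notation "⟪" x ", " y "⟫" => @inner ℂ _ _ x y

lemma cont_rpow {r : ℝ} (hr : 0 ≤ r) : Continuous (fun t : ℝ => t ^ r) :=
  Real.continuous_rpow_const hr

lemma contOn_shift_rpow {ε : ℝ} (hε : 0 < ε) (c : ℝ) :
    ContinuousOn (fun t : ℝ => (t + ε) ^ c) {t : ℝ | 0 ≤ t} := by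
  have h2 : ContinuousOn (fun t : ℝ => t + ε) {t : ℝ | 0 ≤ t} := by fun_prop
  exact h2.rpow_const fun t ht =>
    Or.inl (by simp only [Set.mem_setOf_eq] at ht; positivity)

variable (A : H →L[ℂ] H)

lemma adjoint_mul_self_nonneg : (0 : H →L[ℂ] H) ≤ adjoint A * A := by
  have := star_mul_self_nonneg A
  rwa [star_eq_adjoint] at this

lemma self_mul_adjoint_nonneg : (0 : H →L[ℂ] H) ≤ A * adjoint A := by
  have := mul_star_self_nonneg A
  rwa [star_eq_adjoint] at this

lemma spec_nonneg {D : H →L[ℂ] H} (hD : (0 : H →L[ℂ] H) ≤ D) :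
    spectrum ℝ D ⊆ {t : ℝ | 0 ≤ t} :=
  fun _ ht => spectrum_nonneg_of_nonneg hD ht

/-- Monotonicity of quadratic forms in the Loewner order. -/
lemma mono_inner {D₁ D₂ : H →L[ℂ] H} (h : D₁ ≤ D₂) (x : H) :
    RCLike.re ⟪D₁ x, x⟫ ≤ RCLike.re ⟪D₂ x, x⟫ := by
  rw [ContinuousLinearMap.le_def] at h
  have h0 := h.inner_nonneg_left x
  rw [sub_apply, inner_sub_left] at h0
  replace h0 := (RCLike.nonneg_iff.mp h0).1
  rw [map_sub] at h0
  linarith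

lemma norm_apply_sq {B : H →L[ℂ] H} (hB : IsSelfAdjoint B) (y : H) :
    ‖B y‖ ^ 2 = RCLike.re ⟪(B * B) y, y⟫ := by
  rw [← inner_self_eq_norm_sq (𝕜 := ℂ)]
  congr 1
  rw [ContinuousLinearMap.mul_apply]
  have := adjoint_inner_left B (y := B y) (x := y)
  rw [hB.adjoint_eq] at this
  rw [this]

/-- Quadratic form bound by the operator norm on unit vectors. -/
lemma re_inner_le_norm (B : H →L[ℂ] H) {x : H} (hx : ‖x‖ = 1) :
    RCLike.re ⟪B x, x⟫ ≤ ‖B‖ := by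
  calc RCLike.re ⟪B x, x⟫ ≤ ‖⟪B x, x⟫‖ := RCLike.re_le_norm _
    _ ≤ ‖B x‖ * ‖x‖ := norm_inner_le_norm _ _
    _ ≤ (‖B‖ * ‖x‖) * ‖x‖ := by
        have := B.le_opNorm x
        nlinarith [norm_nonneg x]
    _ = ‖B‖ := by rw [hx]; ring

/-- The key intertwining relation: `f(A A*) A = A f(A* A)`. -/
lemma intertwine [Nontrivial H] (f : ℝ → ℝ) (hf : ContinuousOn f {t : ℝ | 0 ≤ t}) :
    cfc f (A * adjoint A) * A = A * cfc f (adjoint A * A) := by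
  set R := adjoint A * A with hRdef
  set S := A * adjoint A with hSdef
  have hR0 : (0 : H →L[ℂ] H) ≤ R := adjoint_mul_self_nonneg A
  have hS0 : (0 : H →L[ℂ] H) ≤ S := self_mul_adjoint_nonneg A
  have hR : IsSelfAdjoint R := IsSelfAdjoint.of_nonneg hR0
  have hS : IsSelfAdjoint S := IsSelfAdjoint.of_nonneg hS0
  set M : ℝ := max ‖R‖ ‖S‖ with hMdef
  have hspecR : spectrum ℝ R ⊆ Set.Icc 0 M := by
    intro z hz
    refine ⟨spectrum_nonneg_of_nonneg hR0 hz, ?_⟩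
    calc z ≤ ‖z‖ := Real.le_norm_self z
      _ ≤ ‖R‖ := spectrum.norm_le_norm_of_mem hz
      _ ≤ M := le_max_left _ _
  have hspecS : spectrum ℝ S ⊆ Set.Icc 0 M := by
    intro z hz
    refine ⟨spectrum_nonneg_of_nonneg hS0 hz, ?_⟩
    calc z ≤ ‖z‖ := Real.le_norm_self z
      _ ≤ ‖S‖ := spectrum.norm_le_norm_of_mem hz
      _ ≤ M := le_max_right _ _
  have hKsub : Set.Icc (0:ℝ) M ⊆ {t : ℝ | 0 ≤ t} := fun t ht => ht.1
  let ιR : C(spectrum ℝ R, Set.Icc (0:ℝ) M) :=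
    ⟨Set.inclusion hspecR, continuous_inclusion hspecR⟩
  let ιS : C(spectrum ℝ S, Set.Icc (0:ℝ) M) :=
    ⟨Set.inclusion hspecS, continuous_inclusion hspecS⟩
  have key : ∀ g : C(Set.Icc (0:ℝ) M, ℝ),
      cfcHom hS (g.comp ιS) * A = A * cfcHom hR (g.comp ιR) := by
    intro g
    induction g using ContinuousMap.induction_on_of_compact with
    | const r =>
      have h1 : (ContinuousMap.const (Set.Icc (0:ℝ) M) r).comp ιS =
          algebraMap ℝ C(spectrum ℝ S, ℝ) r := rfl
      have h2 : (ContinuousMap.const (Set.Icc (0:ℝ) M) r).comp ιR =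
          algebraMap ℝ C(spectrum ℝ R, ℝ) r := rfl
      rw [h1, h2, AlgHomClass.commutes, AlgHomClass.commutes]
      exact Algebra.commutes r A
    | id =>
      have h1 : ((ContinuousMap.id ℝ).restrict (Set.Icc (0:ℝ) M)).comp ιS =
          (ContinuousMap.id ℝ).restrict (spectrum ℝ S) := by ext z; rfl
      have h2 : ((ContinuousMap.id ℝ).restrict (Set.Icc (0:ℝ) M)).comp ιR =
          (ContinuousMap.id ℝ).restrict (spectrum ℝ R) := by ext z; rfl
      rw [h1, h2, cfcHom_id hS, cfcHom_id hR, hRdef, hSdef, mul_assoc]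
    | star_id =>
      have h1 : star ((ContinuousMap.id ℝ).restrict (Set.Icc (0:ℝ) M)) =
          (ContinuousMap.id ℝ).restrict (Set.Icc (0:ℝ) M) := by ext z; simp
      rw [h1]
      have h2 : ((ContinuousMap.id ℝ).restrict (Set.Icc (0:ℝ) M)).comp ιS =
          (ContinuousMap.id ℝ).restrict (spectrum ℝ S) := by ext z; rfl
      have h3 : ((ContinuousMap.id ℝ).restrict (Set.Icc (0:ℝ) M)).comp ιR =
          (ContinuousMap.id ℝ).restrict (spectrum ℝ R) := by ext z; rfl
      rw [h2, h3, cfcHom_id hS, cfcHom_id hR, hRdef, hSdef, mul_assoc]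
    | add f g hf hg =>
      rw [ContinuousMap.add_comp, ContinuousMap.add_comp, map_add, map_add,
        add_mul, mul_add, hf, hg]
    | mul f g hf hg =>
      rw [ContinuousMap.mul_comp, ContinuousMap.mul_comp, map_mul, map_mul,
        mul_assoc, hg, ← mul_assoc, hf, mul_assoc]
    | frequently g hg =>
      have hcl : IsClosed {g : C(Set.Icc (0:ℝ) M, ℝ) |
          cfcHom hS (g.comp ιS) * A = A * cfcHom hR (g.comp ιR)} := by
        apply isClosed_eq
        · exact (continuous_mul_right A).comp
            ((cfcHom_isClosedEmbedding hS).continuous.comp (ContinuousMap.continuous_precomp ιS))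
        · exact (continuous_mul_left A).comp
            ((cfcHom_isClosedEmbedding hR).continuous.comp (ContinuousMap.continuous_precomp ιR))
      have hmem : g ∈ closure {g : C(Set.Icc (0:ℝ) M, ℝ) |
          cfcHom hS (g.comp ιS) * A = A * cfcHom hR (g.comp ιR)} :=
        mem_closure_iff_frequently.mpr hg
      rwa [hcl.closure_eq] at hmem
  -- now conclude for f
  have hfR : ContinuousOn f (spectrum ℝ R) := hf.mono (hspecR.trans hKsub)
  have hfS : ContinuousOn f (spectrum ℝ S) := hf.mono (hspecS.trans hKsub)
  have hfK : ContinuousOn f (Set.Icc (0:ℝ) M) := hf.mono hKsub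
  have hmain := key ⟨_, continuousOn_iff_continuous_restrict.mp hfK⟩
  rw [cfc_apply f R hR hfR, cfc_apply f S hS hfS]
  convert hmain using 3 <;> exact ContinuousMap.ext fun z => rfl

set_option maxHeartbeats 1000000 in
set_option synthInstance.maxHeartbeats 200000 in
lemma sqrt_eq_cfc_real {D : H →L[ℂ] H} (hD : (0 : H →L[ℂ] H) ≤ D) :
    CFC.sqrt D = cfc Real.sqrt D := by
  have hsa : IsSelfAdjoint D := IsSelfAdjoint.of_nonneg hD
  have hcont : ContinuousOn Real.sqrt (spectrum ℝ D) := Real.continuous_sqrt.continuousOn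
  have hb : (0 : H →L[ℂ] H) ≤ cfc Real.sqrt D := cfc_nonneg fun t _ => Real.sqrt_nonneg t
  have hmul : cfc Real.sqrt D * cfc Real.sqrt D = D := by
    rw [← cfc_mul _ _ D hcont hcont]
    have h2 : cfc (fun t => Real.sqrt t * Real.sqrt t) D = cfc (id : ℝ → ℝ) D :=
      cfc_congr fun t ht => Real.mul_self_sqrt (spec_nonneg hD ht)
    rw [h2, cfc_id ℝ D hsa]
  exact CFC.sqrt_unique hmul hb

lemma opRpow_sqrt {D : H →L[ℂ] H} (hD : (0 : H →L[ℂ] H) ≤ D) {w : ℝ} (hw : 0 ≤ w) :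
    opRpow (CFC.sqrt D) (2 * w) = cfc (fun t : ℝ => t ^ w) D := by
  have hsa : IsSelfAdjoint D := IsSelfAdjoint.of_nonneg hD
  rw [opRpow, sqrt_eq_cfc_real hD,
    ← cfc_comp (fun t : ℝ => t ^ (2 * w)) Real.sqrt D hsa
      ((cont_rpow (by positivity)).continuousOn) Real.continuous_sqrt.continuousOn]
  refine cfc_congr fun t ht => ?_
  have ht0 : (0:ℝ) ≤ t := spec_nonneg hD ht
  simp only [Function.comp_apply]
  rw [Real.sqrt_eq_rpow, ← Real.rpow_mul ht0, show (1/2 : ℝ) * (2*w) = w by ring]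

lemma rpow_subadd {t ε cc : ℝ} (ht : 0 ≤ t) (hε : 0 ≤ ε) (h0 : 0 ≤ cc) (h1 : cc ≤ 1) :
    (t + ε) ^ cc ≤ t ^ cc + ε ^ cc := by
  have h := NNReal.rpow_add_le_add_rpow t.toNNReal ε.toNNReal h0 h1
  calc (t + ε) ^ cc = (((t.toNNReal + ε.toNNReal : ℝ≥0)) : ℝ) ^ cc := by
        rw [NNReal.coe_add, Real.coe_toNNReal t ht, Real.coe_toNNReal ε hε]
    _ = (((t.toNNReal + ε.toNNReal) ^ cc : ℝ≥0) : ℝ) := by rw [NNReal.coe_rpow]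
    _ ≤ ((t.toNNReal ^ cc + ε.toNNReal ^ cc : ℝ≥0) : ℝ) := NNReal.coe_le_coe.mpr h
    _ = t ^ cc + ε ^ cc := by
        rw [NNReal.coe_add, NNReal.coe_rpow, NNReal.coe_rpow,
          Real.coe_toNNReal t ht, Real.coe_toNNReal ε hε]

set_option maxHeartbeats 1000000 in
lemma key (v : ℝ) (hv : v ∈ Set.Icc (0:ℝ) 1) {x : H} (hx : ‖x‖ = 1) :
    ‖⟪A x, x⟫‖ ≤ (1/2) *
      ‖cfc (fun t : ℝ => t ^ (1-v)) (adjoint A * A) +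
        cfc (fun s : ℝ => s ^ v) (A * adjoint A)‖ := by
  haveI : Nontrivial H := nontrivial_of_ne x 0 (by
    intro h; rw [h, norm_zero] at hx; norm_num at hx)
  obtain ⟨hv0, hv1⟩ := hv
  set c : ℝ := 1 - v with hcdef
  have hc0 : 0 ≤ c := by linarith
  have hc1 : c ≤ 1 := by linarith
  set R := adjoint A * A with hRdef
  set S := A * adjoint A with hSdef
  have hR0 : (0 : H →L[ℂ] H) ≤ R := adjoint_mul_self_nonneg A
  have hS0 : (0 : H →L[ℂ] H) ≤ S := self_mul_adjoint_nonneg A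
  have hR : IsSelfAdjoint R := IsSelfAdjoint.of_nonneg hR0
  have hS : IsSelfAdjoint S := IsSelfAdjoint.of_nonneg hS0
  have hspecR : spectrum ℝ R ⊆ {t : ℝ | 0 ≤ t} := spec_nonneg hR0
  have hspecS : spectrum ℝ S ⊆ {t : ℝ | 0 ≤ t} := spec_nonneg hS0
  set P := cfc (fun t : ℝ => t ^ c) R with hPdef
  set Q := cfc (fun s : ℝ => s ^ v) S with hQdef
  have hPcont : ContinuousOn (fun t : ℝ => t ^ c) (spectrum ℝ R) :=
    (cont_rpow hc0).continuousOn
  have hQcont : ContinuousOn (fun s : ℝ => s ^ v) (spectrum ℝ S) :=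
    (cont_rpow hv0).continuousOn
  -- main estimate for a fixed regularization parameter
  have main : ∀ ε : ℝ, 0 < ε → ∀ κ : ℝ, 0 ≤ κ →
      (∀ t : ℝ, 0 ≤ t → (t + ε) ^ c ≤ t ^ c + κ) →
      ‖⟪A x, x⟫‖ ≤ (1/2) * ‖P + Q‖ + κ/2 := by
    intro ε hε κ hκ hpoint
    set φ : ℝ → ℝ := fun t => (t + ε) ^ (c/2) with hφdef
    set ψ : ℝ → ℝ := fun t => (t + ε) ^ (-(c/2)) with hψdef
    set ψ2 : ℝ → ℝ := fun t => (t + ε) ^ (-c) with hψ2def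
    have hφc : ContinuousOn φ {t : ℝ | 0 ≤ t} := contOn_shift_rpow hε _
    have hψc : ContinuousOn ψ {t : ℝ | 0 ≤ t} := contOn_shift_rpow hε _
    have hψ2c : ContinuousOn ψ2 {t : ℝ | 0 ≤ t} := contOn_shift_rpow hε _
    have hφR : ContinuousOn φ (spectrum ℝ R) := hφc.mono hspecR
    have hψR : ContinuousOn ψ (spectrum ℝ R) := hψc.mono hspecR
    have hψ2R : ContinuousOn ψ2 (spectrum ℝ R) := hψ2c.mono hspecR
    have hψ2S : ContinuousOn ψ2 (spectrum ℝ S) := hψ2c.mono hspecS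
    set Φ := cfc φ R with hΦdef
    set Ψo := cfc ψ R with hΨdef
    have hΦsa : IsSelfAdjoint Φ := cfc_predicate φ R
    have hΨsa : IsSelfAdjoint Ψo := cfc_predicate ψ R
    have hεpos : ∀ t ∈ spectrum ℝ R, 0 < t + ε := by
      intro t ht
      have := hspecR ht
      simp only [Set.mem_setOf_eq] at this
      positivity
    have hεposS : ∀ s ∈ spectrum ℝ S, 0 < s + ε := by
      intro s hs
      have := hspecS hs
      simp only [Set.mem_setOf_eq] at this
      positivity
    have hinv : Ψo * Φ = 1 := by
      rw [hΨdef, hΦdef, ← cfc_mul ψ φ R hψR hφR]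
      have h1 : cfc (fun t => ψ t * φ t) R = cfc (fun _ : ℝ => (1:ℝ)) R := by
        refine cfc_congr fun t ht => ?_
        rw [hψdef, hφdef]
        simp only
        rw [← Real.rpow_add (hεpos t ht)]
        norm_num
      rw [h1, cfc_const_one ℝ R hR]
    have hdecomp : A * Ψo * Φ = A := by rw [mul_assoc, hinv, mul_one]
    -- step: inner product splitting
    have hadj : adjoint (A * Ψo) = Ψo * adjoint A := by
      have : A * Ψo = A ∘L Ψo := rfl
      rw [this, ContinuousLinearMap.adjoint_comp, hΨsa.adjoint_eq]
      rfl
    have hstep : ⟪A x, x⟫ = ⟪Φ x, Ψo ((adjoint A) x)⟫ := by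
      conv_lhs => rw [← hdecomp]
      have h1 : (A * Ψo * Φ) x = (A * Ψo) (Φ x) := rfl
      rw [h1]
      have h2 := adjoint_inner_left (adjoint (A * Ψo)) x (Φ x)
      rw [adjoint_adjoint] at h2
      rw [h2, hadj]
      rfl
    have hbound : ‖⟪A x, x⟫‖ ≤ ‖Φ x‖ * ‖Ψo ((adjoint A) x)‖ := by
      rw [hstep]; exact norm_inner_le_norm _ _
    -- bound for ‖Φ x‖²
    have hΦΦ : Φ * Φ = cfc (fun t : ℝ => (t + ε) ^ c) R := by
      rw [hΦdef, ← cfc_mul φ φ R hφR hφR]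
      refine cfc_congr fun t ht => ?_
      rw [hφdef]
      simp only
      rw [← Real.rpow_add (hεpos t ht)]
      norm_num
    have hPκ : cfc (fun t : ℝ => (t + ε) ^ c) R ≤ P + κ • (1 : H →L[ℂ] H) := by
      have h1 : cfc (fun t : ℝ => (t + ε) ^ c) R ≤ cfc (fun t : ℝ => t ^ c + κ) R := by
        refine cfc_mono (fun t ht => hpoint t (hspecR ht)) ?_ ?_
        · exact (contOn_shift_rpow hε c).mono hspecR
        · exact (hPcont.add continuousOn_const)
      have h2 : cfc (fun t : ℝ => t ^ c + κ) R = P + κ • (1 : H →L[ℂ] H) := by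
        rw [cfc_add R (fun t : ℝ => t ^ c) (fun _ => κ) hPcont continuousOn_const,
          cfc_const κ R hR, Algebra.algebraMap_eq_smul_one]
      rw [h2] at h1
      exact h1
    have hu2 : ‖Φ x‖ ^ 2 ≤ RCLike.re ⟪P x, x⟫ + κ := by
      have h1 : ‖Φ x‖ ^ 2 = RCLike.re ⟪(Φ * Φ) x, x⟫ := norm_apply_sq hΦsa x
      have h2 : RCLike.re ⟪(Φ * Φ) x, x⟫ ≤ RCLike.re ⟪(P + κ • (1 : H →L[ℂ] H)) x, x⟫ := by
        rw [hΦΦ]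
        exact mono_inner hPκ x
      have h3 : RCLike.re ⟪(P + κ • (1 : H →L[ℂ] H)) x, x⟫ = RCLike.re ⟪P x, x⟫ + κ := by
        rw [add_apply, inner_add_left, map_add]
        congr 1
        have h4 : (κ • (1 : H →L[ℂ] H)) x = (κ : ℂ) • x := by
          rw [smul_apply, ContinuousLinearMap.one_apply]
          simp [Complex.coe_smul]
        rw [h4, inner_smul_left]
        simp only [Complex.conj_ofReal]
        rw [show @inner ℂ H _ x x = ((‖x‖ : ℂ) ^ 2) from inner_self_eq_norm_sq_to_K x, hx]
        simp
      linarith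
    -- bound for ‖Ψo (A† x)‖²
    have hΨΨ : Ψo * Ψo = cfc ψ2 R := by
      rw [hΨdef, ← cfc_mul ψ ψ R hψR hψR]
      refine cfc_congr fun t ht => ?_
      rw [hψdef, hψ2def]
      simp only
      rw [← Real.rpow_add (hεpos t ht), show -(c/2) + -(c/2) = -c by ring]
    have hABA : A * (Ψo * Ψo) * adjoint A = cfc (fun s : ℝ => ψ2 s * s) S := by
      rw [hΨΨ]
      have h1 := intertwine A ψ2 hψ2c
      rw [← hRdef, ← hSdef] at h1
      rw [← h1, mul_assoc, ← hSdef]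
      have h2 : cfc ψ2 S * S = cfc ψ2 S * cfc (id : ℝ → ℝ) S := by rw [cfc_id ℝ S hS]
      rw [h2, ← cfc_mul ψ2 (id : ℝ → ℝ) S hψ2S continuousOn_id]
      rfl
    have hQle : cfc (fun s : ℝ => ψ2 s * s) S ≤ Q := by
      refine cfc_mono (fun s hs => ?_) ?_ ?_
      · have hs0 : (0:ℝ) ≤ s := hspecS hs
        rcases eq_or_lt_of_le hs0 with h | h
        · rw [hψ2def]
          simp only [← h, mul_zero]
          exact Real.rpow_nonneg (le_refl 0) v
        · have h1 : (s + ε) ^ (-c) ≤ s ^ (-c) :=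
            Real.rpow_le_rpow_of_nonpos h (by linarith) (by linarith)
          have h2 : ψ2 s * s ≤ s ^ (-c) * s := by
            rw [hψ2def]
            exact mul_le_mul_of_nonneg_right h1 hs0
          refine h2.trans ?_
          nth_rewrite 2 [show s = s ^ (1:ℝ) by rw [Real.rpow_one]]
          rw [← Real.rpow_add h, show -c + 1 = v by rw [hcdef]; ring]
      · exact (hψ2S.mul continuousOn_id)
      · exact hQcont
    have hw2 : ‖Ψo ((adjoint A) x)‖ ^ 2 ≤ RCLike.re ⟪Q x, x⟫ := by
      have h1 : ‖Ψo ((adjoint A) x)‖ ^ 2 =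
          RCLike.re ⟪(Ψo * Ψo) ((adjoint A) x), (adjoint A) x⟫ := norm_apply_sq hΨsa _
      have h2 : ⟪(Ψo * Ψo) ((adjoint A) x), (adjoint A) x⟫ =
          ⟪(A * (Ψo * Ψo) * adjoint A) x, x⟫ := by
        rw [adjoint_inner_right A ((Ψo * Ψo) ((adjoint A) x)) x]
        rfl
      rw [h1, h2, hABA]
      exact mono_inner hQle x
    -- assemble
    have hPx0 : (0:ℝ) ≤ RCLike.re ⟪P x, x⟫ + κ := le_trans (sq_nonneg _) hu2
    have hQx0 : (0:ℝ) ≤ RCLike.re ⟪Q x, x⟫ := le_trans (sq_nonneg _) hw2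
    have hprod : ‖Φ x‖ * ‖Ψo ((adjoint A) x)‖ ≤
        (1/2) * ((RCLike.re ⟪P x, x⟫ + κ) + RCLike.re ⟪Q x, x⟫) := by
      nlinarith [sq_nonneg (‖Φ x‖ - ‖Ψo ((adjoint A) x)‖), norm_nonneg (Φ x),
        norm_nonneg (Ψo ((adjoint A) x)), hu2, hw2]
    have hsum : RCLike.re ⟪P x, x⟫ + RCLike.re ⟪Q x, x⟫ = RCLike.re ⟪(P + Q) x, x⟫ := by
      rw [add_apply, inner_add_left, map_add]
    have hfin : RCLike.re ⟪(P + Q) x, x⟫ ≤ ‖P + Q‖ := re_inner_le_norm _ hx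
    calc ‖⟪A x, x⟫‖ ≤ ‖Φ x‖ * ‖Ψo ((adjoint A) x)‖ := hbound
      _ ≤ (1/2) * ((RCLike.re ⟪P x, x⟫ + κ) + RCLike.re ⟪Q x, x⟫) := hprod
      _ ≤ (1/2) * ‖P + Q‖ + κ/2 := by
          have := hsum ▸ hfin
          linarith
  -- now take the limit ε → 0
  refine le_of_forall_pos_le_add fun δ hδ => ?_
  by_cases hv1' : v = 1
  · have h := main 1 one_pos 0 le_rfl (fun t ht => by
      rw [hcdef, hv1']
      norm_num)
    calc ‖⟪A x, x⟫‖ ≤ (1/2) * ‖P + Q‖ + 0/2 := h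
      _ ≤ (1/2) * ‖P + Q‖ + δ := by linarith
  · have hcpos : 0 < c := by
      rw [hcdef]
      rcases lt_or_eq_of_le hv1 with h | h
      · linarith
      · exact absurd h hv1'
    set ε : ℝ := min 1 ((2*δ) ^ c⁻¹) with hεdef
    have hεpos : 0 < ε := by
      apply lt_min one_pos
      exact Real.rpow_pos_of_pos (by linarith) _
    have hκle : ε ^ c ≤ 2*δ := by
      calc ε ^ c ≤ ((2*δ) ^ c⁻¹) ^ c :=
            Real.rpow_le_rpow hεpos.le (min_le_right _ _) hc0
        _ = 2*δ := by
            rw [← Real.rpow_mul (by linarith), inv_mul_cancel₀ (ne_of_gt hcpos), Real.rpow_one]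
    have hκ0 : (0:ℝ) ≤ ε ^ c := Real.rpow_nonneg hεpos.le c
    have h := main ε hεpos (ε ^ c) hκ0 (fun t ht => rpow_subadd ht hεpos.le hc0 hc1)
    calc ‖⟪A x, x⟫‖ ≤ (1/2) * ‖P + Q‖ + (ε ^ c)/2 := h
      _ ≤ (1/2) * ‖P + Q‖ + δ := by linarith

end KittanehAux

theorem stmt0 (A : H →L[ℂ] H) (v : ℝ) (hv : v ∈ Set.Icc (0:ℝ) 1) :
    numRadius A ≤ (1/2) *
      ‖opRpow (absOp A) (2*(1-v)) + opRpow (absOp (ContinuousLinearMap.adjoint A)) (2*v)‖ := by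
  obtain ⟨hv0, hv1⟩ := hv
  have h1 : opRpow (absOp A) (2*(1-v)) =
      cfc (fun t : ℝ => t ^ (1-v)) (ContinuousLinearMap.adjoint A * A) := by
    rw [absOp]
    exact KittanehAux.opRpow_sqrt (KittanehAux.adjoint_mul_self_nonneg A) (by linarith)
  have h2 : opRpow (absOp (ContinuousLinearMap.adjoint A)) (2*v) =
      cfc (fun s : ℝ => s ^ v) (A * ContinuousLinearMap.adjoint A) := by
    rw [absOp, ContinuousLinearMap.adjoint_adjoint]
    exact KittanehAux.opRpow_sqrt (KittanehAux.self_mul_adjoint_nonneg A) hv0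
  rw [numRadius, h1, h2]
  refine Real.iSup_le (fun z => ?_) (by positivity)
  exact KittanehAux.key A v ⟨hv0, hv1⟩ z.2
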